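/- Let f : ℕ → ℕ be injective and let G be the group with presentation ⟨ a_i, b_i, c_i (i ∈ ℕ) | c_{f(i)} = a_{f(i)}^i b_{f(i)}^i (i ∈ ℕ) ⟩. Then for all k ∈ ℕ and x, y ∈ ℤ, the equality c_k = a_k^x b_k^y holds in G if and only if there exists i ∈ ℕ with f(i) = k and x = y = i. In particular, the equation c_k = a_k^x b_k^y has an integer solution (x,y) if and only if k lies in the range of f, and in that case the solution is unique. -/
import Mathlib


/-- The relators `c_{f(i)}⁻¹ a_{f(i)}^i b_{f(i)}^i` (`i ∈ ℕ`) of the presentation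
`⟨ aᵢ, bᵢ, cᵢ (i ∈ ℕ) | c_{f(i)} = a_{f(i)}^i b_{f(i)}^i (i ∈ ℕ) ⟩`.
The generator `a_j` is `(j, 0)`, `b_j` is `(j, 1)` and `c_j` is `(j, 2)`. -/
def abcRels (f : ℕ → ℕ) : Set (FreeGroup (ℕ × Fin 3)) :=
  Set.range fun i =>
    (FreeGroup.of (f i, (2 : Fin 3)))⁻¹ *
      FreeGroup.of (f i, (0 : Fin 3)) ^ i * FreeGroup.of (f i, (1 : Fin 3)) ^ i

/-- The group `⟨ aᵢ, bᵢ, cᵢ (i ∈ ℕ) | c_{f(i)} = a_{f(i)}^i b_{f(i)}^i (i ∈ ℕ) ⟩`. -/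
abbrev ABCGroup (f : ℕ → ℕ) := PresentedGroup (abcRels f)

/-- The image of the generator `(j, t)` in `ABCGroup f` (`t = 0, 1, 2` for `a_j, b_j, c_j`). -/
def abcGen (f : ℕ → ℕ) (x : ℕ × Fin 3) : ABCGroup f := PresentedGroup.of x

theorem abcGen_rel (f : ℕ → ℕ) (i : ℕ) :
    abcGen f (f i, 2) = abcGen f (f i, 0) ^ i * abcGen f (f i, 1) ^ i := by
  have h : PresentedGroup.mk (abcRels f)
      ((FreeGroup.of (f i, (2 : Fin 3)))⁻¹ *
        FreeGroup.of (f i, (0 : Fin 3)) ^ i * FreeGroup.of (f i, (1 : Fin 3)) ^ i) = 1 := by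
    apply (QuotientGroup.eq_one_iff _).2
    exact Subgroup.subset_normalClosure ⟨i, rfl⟩
  simp only [map_mul, map_inv, map_pow] at h
  have := mul_eq_one_iff_eq_inv.mp h
  rw [mul_assoc] at h
  have h2 := eq_of_inv_mul_eq_one h
  simpa [abcGen, PresentedGroup.of] using h2

/-- For injective `f` and `G = ⟨ aᵢ, bᵢ, cᵢ | c_{f(i)} = a_{f(i)}^i b_{f(i)}^i ⟩`:
for all `k ∈ ℕ` and `x, y ∈ ℤ`, the equality `c_k = a_k^x b_k^y` holds in `G` iff
there is `i` with `f i = k`, `x = i`, and `y = i`.  (In particular the equation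
`c_k = a_k^x b_k^y` is solvable in integers iff `k ∈ im f`, and the solution is unique.) -/
theorem abcGroup_ck_eq_pow_iff (f : ℕ → ℕ) (hf : Function.Injective f) (k : ℕ) (x y : ℤ) :
    abcGen f (k, 2) = abcGen f (k, 0) ^ x * abcGen f (k, 1) ^ y ↔
      ∃ i : ℕ, f i = k ∧ x = i ∧ y = i := by
  constructor
  · intro h
    by_cases hk : ∃ i₀, f i₀ = k
    · obtain ⟨i₀, hi₀⟩ := hk
      -- map to Multiplicative (ℤ × ℤ)
      set F : ℕ × Fin 3 → Multiplicative (ℤ × ℤ) := fun p =>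
        if p.1 = k then
          (if p.2 = 0 then Multiplicative.ofAdd ((1 : ℤ), (0 : ℤ))
           else if p.2 = 1 then Multiplicative.ofAdd ((0 : ℤ), (1 : ℤ))
           else Multiplicative.ofAdd ((i₀ : ℤ), (i₀ : ℤ)))
        else 1 with hF
      have hrel : ∀ r ∈ abcRels f, FreeGroup.lift F r = 1 := by
        rintro r ⟨i, rfl⟩
        simp only [map_mul, map_inv, map_pow, FreeGroup.lift_apply_of]
        by_cases hi : f i = k
        · have : i = i₀ := hf (by rw [hi, hi₀])
          subst this
          simp only [hF, hi, if_pos rfl]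
          norm_num
          rw [if_neg (show ¬(2:Fin 3)=0 by decide), if_neg (show ¬(2:Fin 3)=1 by decide),
            ← ofAdd_neg, ← ofAdd_nsmul, ← ofAdd_nsmul, ← ofAdd_add, ← ofAdd_add]
          simp [Prod.ext_iff]
        · simp [hF, hi]
      have := congrArg (PresentedGroup.toGroup hrel) h
      simp only [map_mul, map_zpow, abcGen, PresentedGroup.toGroup.of] at this
      simp only [hF, if_pos rfl] at this
      norm_num at this
      have h1 := congrArg (fun z => (Multiplicative.toAdd z).1) this
      have h2 := congrArg (fun z => (Multiplicative.toAdd z).2) this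
      simp [← ofAdd_zsmul] at h1 h2
      exact ⟨i₀, hi₀, h1.symm, h2.symm⟩
    · exfalso
      set F : ℕ × Fin 3 → Multiplicative ℤ := fun p =>
        if p.1 = k ∧ p.2 = 2 then Multiplicative.ofAdd (1 : ℤ) else 1 with hF
      have hrel : ∀ r ∈ abcRels f, FreeGroup.lift F r = 1 := by
        rintro r ⟨i, rfl⟩
        have hi : f i ≠ k := fun h' => hk ⟨i, h'⟩
        simp [hF, hi]
      have := congrArg (PresentedGroup.toGroup hrel) h
      simp only [map_mul, map_zpow, abcGen, PresentedGroup.toGroup.of] at this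
      simp [hF] at this
  · rintro ⟨i, hik, rfl, rfl⟩
    subst hik
    rw [zpow_natCast, zpow_natCast]
    exact abcGen_rel f i
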